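/- Let R be a Noetherian local ring, M a finite R-module, and A = R ⋉ M the idealization. If a prime ideal P ⋉ M of A is an associated prime of A (as an A-module over itself), then P is an associated prime of R or an associated prime of M as an R-module. -/

import Mathlib

open TrivSqZeroExt

/-- Let `R` be a Noetherian local ring, `M` a finite `R`-module, and
`A = R ⋉ M` the idealization.  If the prime ideal `P ⋉ M` of `A` (the preimage of a prime `P`
of `R` under the projection `A → R`) is an associated prime of `A` as a module over itself,
then `P` is an associated prime of `R` or an associated prime of the `R`-module `M`. -/
theorem associatedPrime_of_idealization {R M : Type*} [CommRing R] [IsNoetherianRing R]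
    [IsLocalRing R] [AddCommGroup M] [Module R M] [Module Rᵐᵒᵖ M] [IsCentralScalar R M]
    [Module.Finite R M] (P : Ideal R)
    (h : IsAssociatedPrime (Ideal.comap (fstHom R R M) P) (TrivSqZeroExt R M)) :
    IsAssociatedPrime P R ∨ IsAssociatedPrime P M := by
  haveI : Module.Finite R (TrivSqZeroExt R M) := Module.Finite.prod
  haveI : IsNoetherianRing (TrivSqZeroExt R M) := IsNoetherianRing.of_finite R _
  obtain ⟨hprime, x, hx⟩ := isAssociatedPrime_iff.1 h
  -- P is prime
  have hPprime : P.IsPrime := by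
    have h2 := hprime.comap (algebraMap R (TrivSqZeroExt R M))
    have heq : Ideal.comap (algebraMap R (TrivSqZeroExt R M))
        (Ideal.comap (fstHom R R M) P) = P := by
      ext s
      simp [Ideal.mem_comap]
    rwa [heq] at h2
  -- membership characterization
  have key : ∀ s : R, s ∈ P ↔ (s * fst x = 0 ∧ s • snd x = 0) := by
    intro s
    have h1 : s ∈ P ↔ (inl s : TrivSqZeroExt R M) ∈ Ideal.comap (fstHom R R M) P := by
      simp [Ideal.mem_comap]
    rw [h1, hx, Submodule.mem_colon_singleton, Submodule.mem_bot, smul_eq_mul]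
    constructor
    · intro h0
      refine ⟨?_, ?_⟩
      · have := congrArg fst h0; simpa using this
      · have := congrArg snd h0; simpa using this
    · rintro ⟨ha, hb⟩
      ext
      · simpa using ha
      · simpa using hb
  by_cases hc : (Submodule.span R {fst x}).annihilator ≤ P
  · left
    refine isAssociatedPrime_iff.2 ⟨hPprime, fst x, le_antisymm ?_ (fun s hs => hc (by rw [Submodule.mem_annihilator_span_singleton]; rwa [Submodule.mem_colon_singleton, Submodule.mem_bot] at hs))⟩
    intro s hs
    rw [Submodule.mem_colon_singleton, Submodule.mem_bot, smul_eq_mul]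
    exact ((key s).1 hs).1
  · right
    refine isAssociatedPrime_iff.2 ⟨hPprime, snd x, le_antisymm ?_ ?_⟩
    · intro s hs
      rw [Submodule.mem_colon_singleton, Submodule.mem_bot]
      exact ((key s).1 hs).2
    · obtain ⟨t, ht, htP⟩ := SetLike.not_le_iff_exists.mp hc
      rw [Submodule.mem_annihilator_span_singleton, smul_eq_mul] at ht
      intro u hu
      rw [Submodule.mem_colon_singleton, Submodule.mem_bot] at hu
      have : t * u ∈ P := by
        rw [key]
        constructor
        · have h3 : t * u * fst x = u * (t * fst x) := by ring
          rw [h3, ht, mul_zero]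
        · rw [mul_smul, hu, smul_zero]
      rcases hPprime.mem_or_mem this with h' | h'
      · exact absurd h' htP
      · exact h'
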